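/- arXiv:1001.1394 — 6 statements merged into one kernel-verified Lean document; each statement's English description precedes it below -/
import Mathlib

section
/- Let U ⊆ ℂ be open, let φ : U → ℂ be holomorphic with φ′(z) ≠ 0 for all z ∈ U, and let u : ℝ² × ℝ → ℝ be a positive twice continuously differentiable function satisfying u_t = (ln u)_{xx} + (ln u)_{yy} everywhere on ℝ² × ℝ. Define ũ on U × ℝ by ũ(z, t) := u(Re φ(z), Im φ(z), t) · |φ′(z)|². Then ũ is positive and satisfies ũ_t = (ln ũ)_{xx} + (ln ũ)_{yy} at every point of U × ℝ, where x, y denote the real and imaginary parts of z. -/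
open Complex Filter Topology

lemma lineX_hasDerivAt (y x' : ℝ) : HasDerivAt (fun s : ℝ => (⟨s, y⟩ : ℂ)) 1 x' := by
  have h : (fun s : ℝ => (⟨s, y⟩ : ℂ)) = fun s : ℝ => (s : ℂ) + (y : ℂ) * I := by
    funext s; rw [Complex.mk_eq_add_mul_I]
  rw [h]
  simpa using (Complex.ofRealCLM.hasDerivAt (x := x')).add_const ((y : ℂ) * I)

lemma lineY_hasDerivAt (x y' : ℝ) : HasDerivAt (fun s : ℝ => (⟨x, s⟩ : ℂ)) I y' := by
  have h : (fun s : ℝ => (⟨x, s⟩ : ℂ)) = fun s : ℝ => (x : ℂ) + (s : ℂ) * I := by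
    funext s; rw [Complex.mk_eq_add_mul_I]
  rw [h]
  simpa using ((Complex.ofRealCLM.hasDerivAt (x := y')).mul_const I).const_add (x : ℂ)

lemma keyX (V : Set ℂ) (hV : IsOpen V) (f : ℂ → ℂ)
    (hf : DifferentiableOn ℂ f V) (hf' : DifferentiableOn ℂ (deriv f) V)
    (g : ℂ → ℝ) (hg : ContDiff ℝ 2 g) (x y : ℝ) (hz : (⟨x, y⟩ : ℂ) ∈ V) :
    HasDerivAt (fun s : ℝ => g (f ⟨s, y⟩)) (fderiv ℝ g (f ⟨x, y⟩) (deriv f ⟨x, y⟩)) x ∧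
    HasDerivAt (fun s : ℝ => fderiv ℝ g (f ⟨s, y⟩) (deriv f ⟨s, y⟩))
      (fderiv ℝ (fderiv ℝ g) (f ⟨x, y⟩) (deriv f ⟨x, y⟩) (deriv f ⟨x, y⟩)
        + fderiv ℝ g (f ⟨x, y⟩) (deriv (deriv f) ⟨x, y⟩)) x := by
  have hline := lineX_hasDerivAt y x
  have hfz : DifferentiableAt ℂ f ⟨x, y⟩ := hf.differentiableAt (hV.mem_nhds hz)
  have hF : HasDerivAt (fun s : ℝ => f ⟨s, y⟩) (deriv f ⟨x, y⟩) x := by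
    simpa [Function.comp_def] using (hfz.hasDerivAt.scomp x hline)
  have hf'z : DifferentiableAt ℂ (deriv f) ⟨x, y⟩ := hf'.differentiableAt (hV.mem_nhds hz)
  have hF' : HasDerivAt (fun s : ℝ => deriv f ⟨s, y⟩) (deriv (deriv f) ⟨x, y⟩) x := by
    simpa [Function.comp_def] using (hf'z.hasDerivAt.scomp x hline)
  have hgd : Differentiable ℝ g := hg.differentiable (by norm_num)
  have h1 : HasDerivAt (fun s : ℝ => g (f ⟨s, y⟩))
      (fderiv ℝ g (f ⟨x, y⟩) (deriv f ⟨x, y⟩)) x := by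
    simpa [Function.comp_def] using
      ((hgd (f ⟨x, y⟩)).hasFDerivAt.comp_hasDerivAt x hF)
  have hFg : ContDiff ℝ 1 (fderiv ℝ g) := hg.fderiv_right (by norm_num)
  have hT : HasDerivAt (fun s : ℝ => fderiv ℝ g (f ⟨s, y⟩))
      (fderiv ℝ (fderiv ℝ g) (f ⟨x, y⟩) (deriv f ⟨x, y⟩)) x := by
    simpa [Function.comp_def] using
      (((hFg.differentiable one_ne_zero) (f ⟨x, y⟩)).hasFDerivAt.comp_hasDerivAt x hF)
  exact ⟨h1, hT.clm_apply hF'⟩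

lemma keyY (V : Set ℂ) (hV : IsOpen V) (f : ℂ → ℂ)
    (hf : DifferentiableOn ℂ f V) (hf' : DifferentiableOn ℂ (deriv f) V)
    (g : ℂ → ℝ) (hg : ContDiff ℝ 2 g) (x y : ℝ) (hz : (⟨x, y⟩ : ℂ) ∈ V) :
    HasDerivAt (fun s : ℝ => g (f ⟨x, s⟩)) (fderiv ℝ g (f ⟨x, y⟩) (I * deriv f ⟨x, y⟩)) y ∧
    HasDerivAt (fun s : ℝ => fderiv ℝ g (f ⟨x, s⟩) (I * deriv f ⟨x, s⟩))
      (fderiv ℝ (fderiv ℝ g) (f ⟨x, y⟩) (I * deriv f ⟨x, y⟩) (I * deriv f ⟨x, y⟩)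
        + fderiv ℝ g (f ⟨x, y⟩) (I * (I * deriv (deriv f) ⟨x, y⟩))) y := by
  have hline := lineY_hasDerivAt x y
  have hfz : DifferentiableAt ℂ f ⟨x, y⟩ := hf.differentiableAt (hV.mem_nhds hz)
  have hF : HasDerivAt (fun s : ℝ => f ⟨x, s⟩) (I * deriv f ⟨x, y⟩) y := by
    simpa [Function.comp_def, smul_eq_mul] using (hfz.hasDerivAt.scomp y hline)
  have hf'z : DifferentiableAt ℂ (deriv f) ⟨x, y⟩ := hf'.differentiableAt (hV.mem_nhds hz)
  have hF'0 : HasDerivAt (fun s : ℝ => deriv f ⟨x, s⟩) (I * deriv (deriv f) ⟨x, y⟩) y := by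
    simpa [Function.comp_def, smul_eq_mul] using (hf'z.hasDerivAt.scomp y hline)
  have hF' : HasDerivAt (fun s : ℝ => I * deriv f ⟨x, s⟩) (I * (I * deriv (deriv f) ⟨x, y⟩)) y :=
    hF'0.const_mul I
  have hgd : Differentiable ℝ g := hg.differentiable (by norm_num)
  have h1 : HasDerivAt (fun s : ℝ => g (f ⟨x, s⟩))
      (fderiv ℝ g (f ⟨x, y⟩) (I * deriv f ⟨x, y⟩)) y := by
    simpa [Function.comp_def] using
      ((hgd (f ⟨x, y⟩)).hasFDerivAt.comp_hasDerivAt y hF)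
  have hFg : ContDiff ℝ 1 (fderiv ℝ g) := hg.fderiv_right (by norm_num)
  have hT : HasDerivAt (fun s : ℝ => fderiv ℝ g (f ⟨x, s⟩))
      (fderiv ℝ (fderiv ℝ g) (f ⟨x, y⟩) (I * deriv f ⟨x, y⟩)) y := by
    simpa [Function.comp_def] using
      (((hFg.differentiable one_ne_zero) (f ⟨x, y⟩)).hasFDerivAt.comp_hasDerivAt y hF)
  exact ⟨h1, hT.clm_apply hF'⟩

lemma bilin (H : ℂ →L[ℝ] ℂ →L[ℝ] ℝ) (c : ℂ) :
    H c c + H (I * c) (I * c) = Complex.normSq c * (H 1 1 + H I I) := by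
  obtain ⟨a, b⟩ := c
  have h1 : (⟨a, b⟩ : ℂ) = a • (1 : ℂ) + b • I := by
    simp [Complex.ext_iff]
  have h2 : I * (⟨a, b⟩ : ℂ) = (-b) • (1 : ℂ) + a • I := by
    simp [Complex.ext_iff]
  have hn : Complex.normSq ⟨a, b⟩ = a ^ 2 + b ^ 2 := by
    simp [Complex.normSq_mk]; ring
  rw [hn, h2, h1]
  simp only [map_add, map_smul, ContinuousLinearMap.add_apply,
    ContinuousLinearMap.coe_smul', Pi.smul_apply, smul_eq_mul, Complex.normSq_mk]
  ring



/-- Conformal-change symmetry of the surface Ricci flow equation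
`u_t = (ln u)_xx + (ln u)_yy`: if `φ` is holomorphic on an open `U ⊆ ℂ` with
nonvanishing derivative and `u` is a positive solution, then
`ũ(z,t) = u(Re φ(z), Im φ(z), t) · |φ'(z)|²` is a positive solution on `U × ℝ`. -/
theorem ricci_flow_conformal_symmetry
    (U : Set ℂ) (hU : IsOpen U) (φ : ℂ → ℂ)
    (hφ : DifferentiableOn ℂ φ U)
    (hφ' : ∀ z ∈ U, deriv φ z ≠ 0)
    (u : ℝ → ℝ → ℝ → ℝ)
    (hu_pos : ∀ x y t : ℝ, 0 < u x y t)
    (hu_smooth : ContDiff ℝ 2 (fun p : ℝ × ℝ × ℝ => u p.1 p.2.1 p.2.2))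
    (hu_pde : ∀ x y t : ℝ,
      deriv (fun t' => u x y t') t =
        deriv (deriv (fun x' => Real.log (u x' y t))) x +
        deriv (deriv (fun y' => Real.log (u x y' t))) y)
    (v : ℝ → ℝ → ℝ → ℝ)
    (hv : v = fun x y t =>
      u (φ ⟨x, y⟩).re (φ ⟨x, y⟩).im t * ‖deriv φ ⟨x, y⟩‖ ^ 2) :
    ∀ x y t : ℝ, (⟨x, y⟩ : ℂ) ∈ U →
      0 < v x y t ∧
      deriv (fun t' => v x y t') t =
        deriv (deriv (fun x' => Real.log (v x' y t))) x +
        deriv (deriv (fun y' => Real.log (v x y' t))) y := by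
  subst hv
  intro x y t hzU
  have hc0 : deriv φ ⟨x, y⟩ ≠ 0 := hφ' _ hzU
  refine ⟨mul_pos (hu_pos _ _ _) (pow_pos (norm_pos_iff.mpr hc0) 2), ?_⟩
  set z₀ : ℂ := ⟨x, y⟩ with hz₀
  set c : ℂ := deriv φ z₀ with hcdef
  set w : ℂ := φ z₀ with hwdef
  set ψ : ℂ → ℂ := fun z => Complex.log (deriv φ z / c) with hψdef
  set K : ℝ := Real.log (Complex.normSq c) with hKdef
  set g1 : ℂ → ℝ := fun w' => Real.log (u w'.re w'.im t) with hg1def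
  set g2 : ℂ → ℝ := fun w' => 2 * w'.re + K with hg2def
  set V : Set ℂ := {z | z ∈ U ∧ deriv φ z / c ∈ Complex.slitPlane} with hVdef
  -- basic facts
  have hφd : DifferentiableOn ℂ (deriv φ) U := ((hφ.analyticOnNhd hU).deriv).differentiableOn
  have hVopen : IsOpen V := by
    have hcont : ContinuousOn (fun z => deriv φ z / c) U := hφd.continuousOn.div_const c
    exact hcont.isOpen_inter_preimage hU Complex.isOpen_slitPlane
  have hz₀V : z₀ ∈ V := by
    refine ⟨hzU, ?_⟩
    rw [show deriv φ z₀ = c from rfl, div_self hc0]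
    exact Complex.one_mem_slitPlane
  have hVU : V ⊆ U := fun z hz => hz.1
  have hφV : DifferentiableOn ℂ φ V := hφ.mono hVU
  have hφ'V : DifferentiableOn ℂ (deriv φ) V := hφd.mono hVU
  have hne0 : ∀ z ∈ V, deriv φ z ≠ 0 := by
    intro z hz h0
    have := hz.2
    simp [h0, Complex.mem_slitPlane_iff] at this
  have hψV : DifferentiableOn ℂ ψ V := by
    intro z hz
    exact ((Complex.differentiableAt_log hz.2).comp z
      ((hφd.differentiableAt (hU.mem_nhds hz.1)).div_const c)).differentiableWithinAt
  have hψd : DifferentiableOn ℂ (deriv ψ) V :=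
    ((hψV.analyticOnNhd hVopen).deriv).differentiableOn
  have hg1 : ContDiff ℝ 2 g1 := by
    have h0 : ContDiff ℝ 2 (fun w' : ℂ => u w'.re w'.im t) :=
      hu_smooth.comp ((Complex.reCLM.contDiff).prodMk
        ((Complex.imCLM.contDiff).prodMk contDiff_const))
    exact h0.log fun w' => (hu_pos _ _ _).ne'
  have hg2 : ContDiff ℝ 2 g2 :=
    (contDiff_const.mul (Complex.reCLM.contDiff)).add contDiff_const
  -- fderiv of g2 is constant
  set L : ℂ →L[ℝ] ℝ := (2 : ℝ) • Complex.reCLM with hLdef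
  have hg2fd : ∀ w' : ℂ, HasFDerivAt g2 L w' := by
    intro w'
    have h1 : HasFDerivAt (fun w' : ℂ => 2 * w'.re) ((2:ℝ) • (Complex.reCLM : ℂ →L[ℝ] ℝ)) w' :=
      (Complex.reCLM.hasFDerivAt (x := w')).const_mul 2
    simpa [hg2def, hLdef] using h1.add_const K
  have hfd2 : fderiv ℝ g2 = fun _ => L := funext fun w' => (hg2fd w').fderiv
  have hfd2' : ∀ w' : ℂ, fderiv ℝ (fderiv ℝ g2) w' = 0 := by
    intro w'; rw [hfd2]; exact fderiv_const_apply L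
  -- the splitting identity
  have claim1 : ∀ z ∈ V,
      Real.log (u (φ z).re (φ z).im t * ‖deriv φ z‖ ^ 2)
        = g1 (φ z) + g2 (ψ z) := by
    intro z hz
    have hne : deriv φ z ≠ 0 := hne0 z hz
    have habs : ‖deriv φ z‖ ≠ 0 := norm_ne_zero_iff.mpr hne
    have hc0' : c ≠ 0 := hc0
    have hcabs : ‖c‖ ≠ 0 := norm_ne_zero_iff.mpr hc0'
    have e1 : Real.log (‖deriv φ z‖ ^ 2)
        = 2 * Real.log (‖deriv φ z‖) := by
      rw [Real.log_pow]; norm_num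
    have e2 : K = 2 * Real.log (‖c‖) := by
      rw [hKdef, ← Complex.sq_norm, Real.log_pow]; norm_num
    rw [Real.log_mul (hu_pos _ _ _).ne' (pow_pos (norm_pos_iff.mpr hne) 2).ne']
    simp only [hg1def, hg2def, hψdef]
    rw [Complex.log_re, norm_div, Real.log_div habs hcabs, e1, e2]
    ring
  -- time derivative
  have hdiff_t : DifferentiableAt ℝ (fun t' => u w.re w.im t') t := by
    have h0 : ContDiff ℝ 2 (fun t' : ℝ => u w.re w.im t') :=
      hu_smooth.comp (contDiff_const.prodMk (contDiff_const.prodMk contDiff_id))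
    exact (h0.differentiable (by norm_num)).differentiableAt
  have hLHS : deriv (fun t' => u w.re w.im t' * ‖c‖ ^ 2) t
      = deriv (fun t' => u w.re w.im t') t * ‖c‖ ^ 2 :=
    deriv_mul_const hdiff_t _
  -- x-direction second derivative
  have hWx : IsOpen {s : ℝ | (⟨s, y⟩ : ℂ) ∈ V} := by
    refine hVopen.preimage ?_
    have h : (fun s : ℝ => (⟨s, y⟩ : ℂ)) = fun s : ℝ => (s : ℂ) + (y : ℂ) * I := by
      funext s; rw [Complex.mk_eq_add_mul_I]
    rw [h]; exact Complex.continuous_ofReal.add continuous_const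
  have hdx : ∀ s : ℝ, (⟨s, y⟩ : ℂ) ∈ V →
      deriv (fun x' => Real.log
        (u (φ ⟨x', y⟩).re (φ ⟨x', y⟩).im t * ‖deriv φ ⟨x', y⟩‖ ^ 2)) s
      = fderiv ℝ g1 (φ ⟨s, y⟩) (deriv φ ⟨s, y⟩)
        + fderiv ℝ g2 (ψ ⟨s, y⟩) (deriv ψ ⟨s, y⟩) := by
    intro s hs
    have hW' : ∀ᶠ r in 𝓝 s, (⟨r, y⟩ : ℂ) ∈ V := hWx.mem_nhds hs
    have hEq : (fun x' => Real.log
        (u (φ ⟨x', y⟩).re (φ ⟨x', y⟩).im t * ‖deriv φ ⟨x', y⟩‖ ^ 2))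
        =ᶠ[𝓝 s] (fun x' => g1 (φ ⟨x', y⟩) + g2 (ψ ⟨x', y⟩)) :=
      hW'.mono fun r hr => claim1 _ hr
    rw [hEq.deriv_eq]
    exact (((keyX V hVopen φ hφV hφ'V g1 hg1 s y hs).1).add
      ((keyX V hVopen ψ hψV hψd g2 hg2 s y hs).1)).deriv
  have hdx2 : deriv (deriv (fun x' => Real.log
      (u (φ ⟨x', y⟩).re (φ ⟨x', y⟩).im t * ‖deriv φ ⟨x', y⟩‖ ^ 2))) x
      = (fderiv ℝ (fderiv ℝ g1) w c c + fderiv ℝ g1 w (deriv (deriv φ) z₀))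
        + (fderiv ℝ (fderiv ℝ g2) (ψ z₀) (deriv ψ z₀) (deriv ψ z₀)
          + fderiv ℝ g2 (ψ z₀) (deriv (deriv ψ) z₀)) := by
    have hmemx : ∀ᶠ s in 𝓝 x, (⟨s, y⟩ : ℂ) ∈ V := hWx.mem_nhds hz₀V
    have hEq2 : deriv (fun x' => Real.log
        (u (φ ⟨x', y⟩).re (φ ⟨x', y⟩).im t * ‖deriv φ ⟨x', y⟩‖ ^ 2))
        =ᶠ[𝓝 x] (fun s => fderiv ℝ g1 (φ ⟨s, y⟩) (deriv φ ⟨s, y⟩)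
          + fderiv ℝ g2 (ψ ⟨s, y⟩) (deriv ψ ⟨s, y⟩)) := hmemx.mono hdx
    rw [hEq2.deriv_eq]
    exact (((keyX V hVopen φ hφV hφ'V g1 hg1 x y hz₀V).2).add
      ((keyX V hVopen ψ hψV hψd g2 hg2 x y hz₀V).2)).deriv
  -- y-direction second derivative
  have hWy : IsOpen {s : ℝ | (⟨x, s⟩ : ℂ) ∈ V} := by
    refine hVopen.preimage ?_
    exact (continuous_const.add (Complex.continuous_ofReal.mul continuous_const)).congr
      fun s => (Complex.mk_eq_add_mul_I x s).symm
  have hdy : ∀ s : ℝ, (⟨x, s⟩ : ℂ) ∈ V →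
      deriv (fun y' => Real.log
        (u (φ ⟨x, y'⟩).re (φ ⟨x, y'⟩).im t * ‖deriv φ ⟨x, y'⟩‖ ^ 2)) s
      = fderiv ℝ g1 (φ ⟨x, s⟩) (I * deriv φ ⟨x, s⟩)
        + fderiv ℝ g2 (ψ ⟨x, s⟩) (I * deriv ψ ⟨x, s⟩) := by
    intro s hs
    have hW' : ∀ᶠ r in 𝓝 s, (⟨x, r⟩ : ℂ) ∈ V := hWy.mem_nhds hs
    have hEq : (fun y' => Real.log
        (u (φ ⟨x, y'⟩).re (φ ⟨x, y'⟩).im t * ‖deriv φ ⟨x, y'⟩‖ ^ 2))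
        =ᶠ[𝓝 s] (fun y' => g1 (φ ⟨x, y'⟩) + g2 (ψ ⟨x, y'⟩)) :=
      hW'.mono fun r hr => claim1 _ hr
    rw [hEq.deriv_eq]
    exact (((keyY V hVopen φ hφV hφ'V g1 hg1 x s hs).1).add
      ((keyY V hVopen ψ hψV hψd g2 hg2 x s hs).1)).deriv
  have hdy2 : deriv (deriv (fun y' => Real.log
      (u (φ ⟨x, y'⟩).re (φ ⟨x, y'⟩).im t * ‖deriv φ ⟨x, y'⟩‖ ^ 2))) y
      = (fderiv ℝ (fderiv ℝ g1) w (I * c) (I * c)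
          + fderiv ℝ g1 w (I * (I * deriv (deriv φ) z₀)))
        + (fderiv ℝ (fderiv ℝ g2) (ψ z₀) (I * deriv ψ z₀) (I * deriv ψ z₀)
          + fderiv ℝ g2 (ψ z₀) (I * (I * deriv (deriv ψ) z₀))) := by
    have hmemy : ∀ᶠ s in 𝓝 y, (⟨x, s⟩ : ℂ) ∈ V := hWy.mem_nhds hz₀V
    have hEq2 : deriv (fun y' => Real.log
        (u (φ ⟨x, y'⟩).re (φ ⟨x, y'⟩).im t * ‖deriv φ ⟨x, y'⟩‖ ^ 2))
        =ᶠ[𝓝 y] (fun s => fderiv ℝ g1 (φ ⟨x, s⟩) (I * deriv φ ⟨x, s⟩)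
          + fderiv ℝ g2 (ψ ⟨x, s⟩) (I * deriv ψ ⟨x, s⟩)) := hmemy.mono hdy
    rw [hEq2.deriv_eq]
    exact (((keyY V hVopen φ hφV hφ'V g1 hg1 x y hz₀V).2).add
      ((keyY V hVopen ψ hψV hψd g2 hg2 x y hz₀V).2)).deriv
  -- identification of pure second derivatives of g1 with hu_pde data
  have hidD : DifferentiableOn ℂ (fun z : ℂ => z) Set.univ :=
    differentiable_id.differentiableOn
  have hidd : deriv (fun z : ℂ => z) = fun _ : ℂ => (1 : ℂ) :=
    funext fun z => deriv_id z
  have hid' : DifferentiableOn ℂ (deriv (fun z : ℂ => z)) Set.univ := by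
    rw [hidd]; exact (differentiable_const _).differentiableOn
  have hidd2 : deriv (deriv (fun z : ℂ => z)) = fun _ : ℂ => (0 : ℂ) := by
    rw [hidd]; exact funext fun z => deriv_const _ _
  have hH11 : deriv (deriv (fun x' => Real.log (u x' w.im t))) w.re
      = fderiv ℝ (fderiv ℝ g1) w 1 1 := by
    have h1 : deriv (fun x' => Real.log (u x' w.im t))
        = fun s => fderiv ℝ g1 ((fun z : ℂ => z) ⟨s, w.im⟩)
            (deriv (fun z : ℂ => z) ⟨s, w.im⟩) :=
      funext fun s =>
        ((keyX Set.univ isOpen_univ (fun z => z) hidD hid' g1 hg1 s w.im trivial).1).deriv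
    rw [h1,
      ((keyX Set.univ isOpen_univ (fun z => z) hidD hid' g1 hg1 w.re w.im trivial).2).deriv]
    simp [hidd, hidd2, Complex.eta]
  have hHII : deriv (deriv (fun y' => Real.log (u w.re y' t))) w.im
      = fderiv ℝ (fderiv ℝ g1) w I I := by
    have h1 : deriv (fun y' => Real.log (u w.re y' t))
        = fun s => fderiv ℝ g1 ((fun z : ℂ => z) ⟨w.re, s⟩)
            (I * deriv (fun z : ℂ => z) ⟨w.re, s⟩) :=
      funext fun s =>
        ((keyY Set.univ isOpen_univ (fun z => z) hidD hid' g1 hg1 w.re s trivial).1).deriv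
    rw [h1,
      ((keyY Set.univ isOpen_univ (fun z => z) hidD hid' g1 hg1 w.re w.im trivial).2).deriv]
    simp [hidd, hidd2, Complex.eta]
  -- assemble
  have hval : deriv (fun t' => u w.re w.im t') t
      = fderiv ℝ (fderiv ℝ g1) w 1 1 + fderiv ℝ (fderiv ℝ g1) w I I := by
    rw [hu_pde w.re w.im t, hH11, hHII]
  have hb := bilin (fderiv ℝ (fderiv ℝ g1) w) c
  have hneg : ∀ d : ℂ, I * (I * d) = -d := by
    intro d; rw [← mul_assoc, Complex.I_mul_I, neg_one_mul]
  rw [hdx2, hdy2, hLHS, Complex.sq_norm, hval, hfd2' (ψ z₀)]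
  simp only [hneg, map_neg, ContinuousLinearMap.zero_apply]
  linear_combination -hb
end

section
/- Let f : ℝ³ → ℝ be a twice continuously differentiable function satisfying e^{f}(∂²_t f + (∂_t f)²) = ∂²_x f + ∂²_y f at every point (x,y,t) ∈ ℝ³. Then for any fixed ε ∈ ℝ, the function w(x,y,t) := f(x, y, e^{−ε} t) + 2ε also satisfies e^{w}(∂²_t w + (∂_t w)²) = ∂²_x w + ∂²_y w at every point of ℝ³. -/
lemma deriv_scale (g : ℝ → ℝ) (hg : Differentiable ℝ g) (c t : ℝ) :
    deriv (fun s => g (c * s)) t = c * deriv g (c * t) := by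
  have hid : HasDerivAt (fun s : ℝ => c * s) (c * 1) t := (hasDerivAt_id t).const_mul c
  have h := (hg (c * t)).hasDerivAt.comp t hid
  simpa [mul_comm, Function.comp_def] using h.deriv

lemma slice_deriv_scale (g : ℝ → ℝ) (hg : Differentiable ℝ g) (c k : ℝ) :
    deriv (fun t' => g (c * t') + k) = fun t => c * deriv g (c * t) := by
  funext t
  rw [deriv_add_const]
  exact deriv_scale g hg c t

/-- Time-scaling symmetry `w(x,y,t) = f(x, y, e^{-ε} t) + 2ε` of the surface
hyperbolic geometric flow equation `e^w (w_tt + w_t²) = w_xx + w_yy`. -/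
theorem hyperbolic_flow_scaling_symmetry
    (f : ℝ → ℝ → ℝ → ℝ)
    (hf : ContDiff ℝ 2 (fun p : ℝ × ℝ × ℝ => f p.1 p.2.1 p.2.2))
    (hpde : ∀ x y t : ℝ,
      Real.exp (f x y t) *
          (deriv (deriv (fun t' => f x y t')) t + (deriv (fun t' => f x y t') t) ^ 2) =
        deriv (deriv (fun x' => f x' y t)) x +
        deriv (deriv (fun y' => f x y' t)) y)
    (ε : ℝ) :
    ∀ x y t : ℝ,
      Real.exp (f x y (Real.exp (-ε) * t) + 2 * ε) *
          (deriv (deriv (fun t' => f x y (Real.exp (-ε) * t') + 2 * ε)) t +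
            (deriv (fun t' => f x y (Real.exp (-ε) * t') + 2 * ε) t) ^ 2) =
        deriv (deriv (fun x' => f x' y (Real.exp (-ε) * t) + 2 * ε)) x +
        deriv (deriv (fun y' => f x y' (Real.exp (-ε) * t) + 2 * ε)) y := by
  intro x y t
  set c := Real.exp (-ε) with hc
  set g : ℝ → ℝ := fun t' => f x y t' with hgdef
  have hg : ContDiff ℝ 2 g :=
    hf.comp (contDiff_const.prodMk (contDiff_const.prodMk contDiff_id))
  have hgd : Differentiable ℝ g := hg.differentiable two_ne_zero
  have hg' : ContDiff ℝ 1 (deriv g) := by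
    have := (contDiff_succ_iff_deriv (n := 1)).mp (by exact_mod_cast hg)
    exact this.2.2
  have hgd' : Differentiable ℝ (deriv g) := hg'.differentiable one_ne_zero
  have h1 : deriv (fun t' => g (c * t') + 2 * ε) = fun s => c * deriv g (c * s) :=
    slice_deriv_scale g hgd c (2 * ε)
  have h2 : deriv (deriv (fun t' => g (c * t') + 2 * ε)) t
      = c * (c * deriv (deriv g) (c * t)) := by
    rw [h1]
    rw [deriv_const_mul _ (show DifferentiableAt ℝ (fun s => deriv g (c * s)) t from
      (hgd' (c * t)).comp t ((differentiableAt_fun_id.const_mul c)))]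
    rw [deriv_scale (deriv g) hgd' c t]
  have hxslice : deriv (deriv (fun x' => f x' y (c * t) + 2 * ε)) x
      = deriv (deriv (fun x' => f x' y (c * t))) x := by
    have h : deriv (fun x' => f x' y (c * t) + 2 * ε) = deriv (fun x' => f x' y (c * t)) :=
      funext fun s => deriv_add_const _
    rw [h]
  have hyslice : deriv (deriv (fun y' => f x y' (c * t) + 2 * ε)) y
      = deriv (deriv (fun y' => f x y' (c * t))) y := by
    have h : deriv (fun y' => f x y' (c * t) + 2 * ε) = deriv (fun y' => f x y' (c * t)) :=
      funext fun s => deriv_add_const _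
    rw [h]
  have key := hpde x y (c * t)
  show Real.exp (g (c * t) + 2 * ε) * _ = _
  rw [h2, h1, hxslice, hyslice, ← key, Real.exp_add]
  have h3 : Real.exp (2 * ε) * (c * c) = 1 := by
    rw [hc, ← Real.exp_add, ← Real.exp_add]; ring_nf; exact Real.exp_zero
  have hD2 : deriv (deriv (fun t' => f x y t')) (c * t) = deriv (deriv g) (c * t) := rfl
  have hD1 : deriv (fun t' => f x y t') (c * t) = deriv g (c * t) := rfl
  rw [hD2, hD1]
  show Real.exp (g (c * t)) * Real.exp (2 * ε) *
      (c * (c * deriv (deriv g) (c * t)) + (c * deriv g (c * t)) ^ 2) = _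
  linear_combination Real.exp (g (c * t)) *
    (deriv (deriv g) (c * t) + deriv g (c * t) ^ 2) * h3
end

section
/- Let f : ℝ³ → ℝ be a twice continuously differentiable function satisfying e^{f}(∂²_t f + (∂_t f)²) = ∂²_x f + ∂²_y f at every point (x,y,t) ∈ ℝ³. Then for any fixed ε ∈ ℝ, the function w(x,y,t) := f(x − ε y, y + ε x, √(1 + ε²) · t) also satisfies e^{w}(∂²_t w + (∂_t w)²) = ∂²_x w + ∂²_y w at every point of ℝ³. -/
lemma hgf_line_deriv (G : ℝ × ℝ × ℝ → ℝ) (hG : Differentiable ℝ G)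
    (p v : ℝ × ℝ × ℝ) (s : ℝ) :
    deriv (fun s' : ℝ => G (p + s' • v)) s = fderiv ℝ G (p + s • v) v := by
  have hl : HasDerivAt (fun s' : ℝ => p + s' • v) v s := by
    simpa using ((hasDerivAt_id s).smul_const v).const_add p
  exact ((hG (p + s • v)).hasFDerivAt.comp_hasDerivAt s hl).deriv

lemma hgf_diff_fderiv (G : ℝ × ℝ × ℝ → ℝ) (hG : ContDiff ℝ 2 G) (v : ℝ × ℝ × ℝ) :
    Differentiable ℝ (fun q => fderiv ℝ G q v) := by
  have hfd : ContDiff ℝ 1 (fderiv ℝ G) := hG.fderiv_right (by norm_num)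
  exact (hfd.differentiable (by norm_num)).clm_apply (differentiable_const v)

lemma hgf_line_deriv2 (G : ℝ × ℝ × ℝ → ℝ) (hG : ContDiff ℝ 2 G)
    (p v : ℝ × ℝ × ℝ) (s : ℝ) :
    deriv (deriv (fun s' : ℝ => G (p + s' • v))) s =
      fderiv ℝ (fun q => fderiv ℝ G q v) (p + s • v) v := by
  have h1 : deriv (fun s' : ℝ => G (p + s' • v)) = fun s' => fderiv ℝ G (p + s' • v) v :=
    funext (hgf_line_deriv G (hG.differentiable (by norm_num)) p v)
  rw [h1]
  exact hgf_line_deriv _ (hgf_diff_fderiv G hG v) p v s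

lemma hgf_D2 (G : ℝ × ℝ × ℝ → ℝ) (hG : ContDiff ℝ 2 G) (a b : ℝ)
    (v1 v2 p w : ℝ × ℝ × ℝ) :
    fderiv ℝ (fun q => fderiv ℝ G q (a • v1 + b • v2)) p w
      = a * fderiv ℝ (fun q => fderiv ℝ G q v1) p w
        + b * fderiv ℝ (fun q => fderiv ℝ G q v2) p w := by
  have h1 := hgf_diff_fderiv G hG v1
  have h2 := hgf_diff_fderiv G hG v2
  have heq : (fun q => fderiv ℝ G q (a • v1 + b • v2))
      = fun q => a • (fderiv ℝ G q v1) + b • (fderiv ℝ G q v2) := by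
    funext q; simp
  rw [heq, fderiv_fun_add (show DifferentiableAt ℝ (fun q => a • fderiv ℝ G q v1) p from (h1 p).const_smul a)
      (show DifferentiableAt ℝ (fun q => b • fderiv ℝ G q v2) p from (h2 p).const_smul b),
    fderiv_fun_const_smul (h1 p) a, fderiv_fun_const_smul (h2 p) b]
  simp

lemma hgf_second (G : ℝ × ℝ × ℝ → ℝ) (hG : ContDiff ℝ 2 G)
    (p v1 v2 : ℝ × ℝ × ℝ) (a b s : ℝ) :
    deriv (deriv (fun s' : ℝ => G (p + s' • (a • v1 + b • v2)))) s
      = a * (a * fderiv ℝ (fun q => fderiv ℝ G q v1) (p + s • (a • v1 + b • v2)) v1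
             + b * fderiv ℝ (fun q => fderiv ℝ G q v1) (p + s • (a • v1 + b • v2)) v2)
      + b * (a * fderiv ℝ (fun q => fderiv ℝ G q v2) (p + s • (a • v1 + b • v2)) v1
             + b * fderiv ℝ (fun q => fderiv ℝ G q v2) (p + s • (a • v1 + b • v2)) v2) := by
  rw [hgf_line_deriv2 G hG, hgf_D2 G hG]
  simp [smul_eq_mul]
  try ring

/-- Rotation-plus-time-rescaling symmetry
`w(x,y,t) = f(x - εy, y + εx, √(1 + ε²) t)` of the surface hyperbolic
geometric flow equation `e^w (w_tt + w_t²) = w_xx + w_yy`. -/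
theorem hyperbolic_flow_rotation_symmetry
    (f : ℝ → ℝ → ℝ → ℝ)
    (hf : ContDiff ℝ 2 (fun p : ℝ × ℝ × ℝ => f p.1 p.2.1 p.2.2))
    (hpde : ∀ x y t : ℝ,
      Real.exp (f x y t) *
          (deriv (deriv (fun t' => f x y t')) t + (deriv (fun t' => f x y t') t) ^ 2) =
        deriv (deriv (fun x' => f x' y t)) x +
        deriv (deriv (fun y' => f x y' t)) y)
    (ε : ℝ) :
    ∀ x y t : ℝ,
      Real.exp (f (x - ε * y) (y + ε * x) (Real.sqrt (1 + ε ^ 2) * t)) *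
          (deriv (deriv (fun t' => f (x - ε * y) (y + ε * x) (Real.sqrt (1 + ε ^ 2) * t'))) t +
            (deriv (fun t' => f (x - ε * y) (y + ε * x) (Real.sqrt (1 + ε ^ 2) * t')) t) ^ 2) =
        deriv (deriv (fun x' =>
          f (x' - ε * y) (y + ε * x') (Real.sqrt (1 + ε ^ 2) * t))) x +
        deriv (deriv (fun y' =>
          f (x - ε * y') (y' + ε * x) (Real.sqrt (1 + ε ^ 2) * t))) y := by
  intro x y t
  set c : ℝ := Real.sqrt (1 + ε ^ 2) with hcdef
  set F : ℝ × ℝ × ℝ → ℝ := fun p => f p.1 p.2.1 p.2.2 with hFdef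
  have hc2 : c ^ 2 = 1 + ε ^ 2 := Real.sq_sqrt (by positivity)
  set e1 : ℝ × ℝ × ℝ := (1, 0, 0) with he1
  set e2 : ℝ × ℝ × ℝ := (0, 1, 0) with he2
  set e3 : ℝ × ℝ × ℝ := (0, 0, 1) with he3
  have hFd : Differentiable ℝ F := hf.differentiable (by norm_num)
  -- line forms of the rotated functions
  have hxf : (fun x' : ℝ => f (x' - ε * y) (y + ε * x') (c * t))
      = fun s : ℝ => F ((-(ε * y), y, c * t) + s • ((1 : ℝ) • e1 + ε • e2)) := by
    funext s
    simp only [hFdef, he1, he2, Prod.smul_mk, Prod.mk_add_mk, smul_eq_mul]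
    norm_num
    ring_nf
  have hyf : (fun y' : ℝ => f (x - ε * y') (y' + ε * x) (c * t))
      = fun s : ℝ => F ((x, ε * x, c * t) + s • ((-ε : ℝ) • e1 + (1 : ℝ) • e2)) := by
    funext s
    simp only [hFdef, he1, he2, Prod.smul_mk, Prod.mk_add_mk, smul_eq_mul]
    norm_num
    ring_nf
  have htf : (fun t' : ℝ => f (x - ε * y) (y + ε * x) (c * t'))
      = fun s : ℝ => F ((x - ε * y, y + ε * x, 0) + s • ((c : ℝ) • e3 + (0 : ℝ) • e3)) := by
    funext s
    simp only [hFdef, he3, Prod.smul_mk, Prod.mk_add_mk, smul_eq_mul]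
    norm_num
    ring_nf
  -- point equalities
  have hptx : (-(ε * y), y, c * t) + x • ((1 : ℝ) • e1 + ε • e2)
      = ((x - ε * y, y + ε * x, c * t) : ℝ × ℝ × ℝ) := by
    simp only [he1, he2, Prod.smul_mk, Prod.mk_add_mk, smul_eq_mul, Prod.mk.injEq]
    norm_num; constructor <;> ring
  have hpty : (x, ε * x, c * t) + y • ((-ε : ℝ) • e1 + (1 : ℝ) • e2)
      = ((x - ε * y, y + ε * x, c * t) : ℝ × ℝ × ℝ) := by
    simp only [he1, he2, Prod.smul_mk, Prod.mk_add_mk, smul_eq_mul, Prod.mk.injEq]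
    norm_num; constructor <;> ring
  have hptt : (x - ε * y, y + ε * x, 0) + t • ((c : ℝ) • e3 + (0 : ℝ) • e3)
      = ((x - ε * y, y + ε * x, c * t) : ℝ × ℝ × ℝ) := by
    simp only [he3, Prod.smul_mk, Prod.mk_add_mk, smul_eq_mul, Prod.mk.injEq]
    norm_num; ring
  -- rewrite the goal
  rw [hxf, hyf, htf, hgf_second F hf, hgf_second F hf, hgf_second F hf,
    hgf_line_deriv F hFd, hptx, hpty, hptt]
  have hg3 : fderiv ℝ F (x - ε * y, y + ε * x, c * t) ((c : ℝ) • e3 + (0 : ℝ) • e3)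
      = c * fderiv ℝ F (x - ε * y, y + ε * x, c * t) e3 := by simp
  rw [hg3]
  -- rewrite the PDE hypothesis at the transformed point
  have h1 := hpde (x - ε * y) (y + ε * x) (c * t)
  have htf0 : (fun t' : ℝ => f (x - ε * y) (y + ε * x) t')
      = fun s : ℝ => F ((x - ε * y, y + ε * x, 0) + s • e3) := by
    funext s
    simp only [hFdef, he3, Prod.smul_mk, Prod.mk_add_mk, smul_eq_mul]
    norm_num
  have hxf0 : (fun x' : ℝ => f x' (y + ε * x) (c * t))
      = fun s : ℝ => F ((0, y + ε * x, c * t) + s • e1) := by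
    funext s
    simp only [hFdef, he1, Prod.smul_mk, Prod.mk_add_mk, smul_eq_mul]
    norm_num
  have hyf0 : (fun y' : ℝ => f (x - ε * y) y' (c * t))
      = fun s : ℝ => F ((x - ε * y, 0, c * t) + s • e2) := by
    funext s
    simp only [hFdef, he2, Prod.smul_mk, Prod.mk_add_mk, smul_eq_mul]
    norm_num
  have hptt0 : (x - ε * y, y + ε * x, 0) + (c * t) • e3
      = ((x - ε * y, y + ε * x, c * t) : ℝ × ℝ × ℝ) := by
    simp [he3]
  have hptx0 : (0, y + ε * x, c * t) + (x - ε * y) • e1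
      = ((x - ε * y, y + ε * x, c * t) : ℝ × ℝ × ℝ) := by
    simp [he1]
  have hpty0 : (x - ε * y, 0, c * t) + (y + ε * x) • e2
      = ((x - ε * y, y + ε * x, c * t) : ℝ × ℝ × ℝ) := by
    simp [he2]
  rw [htf0, hxf0, hyf0, hgf_line_deriv2 F hf, hgf_line_deriv2 F hf, hgf_line_deriv2 F hf,
    hgf_line_deriv F hFd, hptt0, hptx0, hpty0] at h1
  have hexp : f (x - ε * y) (y + ε * x) (c * t) = F (x - ε * y, y + ε * x, c * t) := by
    simp [hFdef]
  rw [hexp] at h1 ⊢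
  linear_combination (c ^ 2) * h1 +
    (fderiv ℝ (fun q => fderiv ℝ F q e1) (x - ε * y, y + ε * x, c * t) e1 +
     fderiv ℝ (fun q => fderiv ℝ F q e2) (x - ε * y, y + ε * x, c * t) e2) * hc2
end

section
/- Let U ⊆ ℂ be open, let φ : U → ℂ be holomorphic with φ′(z) ≠ 0 for all z ∈ U, and let u : ℝ² × ℝ → ℝ be a positive twice continuously differentiable function satisfying u_{tt} = (ln u)_{xx} + (ln u)_{yy} everywhere on ℝ² × ℝ. Define ũ on U × ℝ by ũ(z, t) := u(Re φ(z), Im φ(z), t) · |φ′(z)|². Then ũ is positive and satisfies ũ_{tt} = (ln ũ)_{xx} + (ln ũ)_{yy} at every point of U × ℝ, where x, y denote the real and imaginary parts of z. -/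
open Complex Filter

private lemma hasDerivAt_mkX (y x : ℝ) : HasDerivAt (fun x' : ℝ => (⟨x', y⟩ : ℂ)) 1 x := by
  have h1 : HasDerivAt (fun x' : ℝ => (x' : ℂ)) 1 x := by
    simpa using (hasDerivAt_id x).ofReal_comp
  have h2 := h1.add_const (⟨0, y⟩ : ℂ)
  have e : (fun x' : ℝ => (x' : ℂ) + ⟨0, y⟩) = fun x' : ℝ => (⟨x', y⟩ : ℂ) := by
    funext x'; apply Complex.ext <;> simp
  simpa [e] using h2

private lemma hasDerivAt_mkY (x y : ℝ) :
    HasDerivAt (fun y' : ℝ => (⟨x, y'⟩ : ℂ)) Complex.I y := by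
  have h1 : HasDerivAt (fun y' : ℝ => (y' : ℂ)) 1 y := by
    simpa using (hasDerivAt_id y).ofReal_comp
  have h2 := (h1.mul_const Complex.I).add_const (⟨x, 0⟩ : ℂ)
  have e : (fun y' : ℝ => (y' : ℂ) * Complex.I + ⟨x, 0⟩) = fun y' : ℝ => (⟨x, y'⟩ : ℂ) := by
    funext y'; apply Complex.ext <;> simp
  simpa [e] using h2

private lemma hasDerivAt_compX {h : ℂ → ℂ} {x y : ℝ} (hd : DifferentiableAt ℂ h ⟨x, y⟩) :
    HasDerivAt (fun x' : ℝ => h ⟨x', y⟩) (deriv h ⟨x, y⟩) x := by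
  have := hd.hasDerivAt.scomp_of_eq x (hasDerivAt_mkX y x) rfl
  simpa [Function.comp_def] using this

private lemma hasDerivAt_compY {h : ℂ → ℂ} {x y : ℝ} (hd : DifferentiableAt ℂ h ⟨x, y⟩) :
    HasDerivAt (fun y' : ℝ => h ⟨x, y'⟩) (Complex.I * deriv h ⟨x, y⟩) y := by
  have := hd.hasDerivAt.scomp_of_eq y (hasDerivAt_mkY x y) rfl
  simpa [Function.comp_def, smul_eq_mul] using this

private lemma hasDerivAt_re_compX {h : ℂ → ℂ} {x y : ℝ} (hd : DifferentiableAt ℂ h ⟨x, y⟩) :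
    HasDerivAt (fun x' : ℝ => (h ⟨x', y⟩).re) (deriv h ⟨x, y⟩).re x := by
  have := Complex.reCLM.hasFDerivAt.comp_hasDerivAt x (hasDerivAt_compX hd)
  simpa [Function.comp_def] using this

private lemma hasDerivAt_im_compX {h : ℂ → ℂ} {x y : ℝ} (hd : DifferentiableAt ℂ h ⟨x, y⟩) :
    HasDerivAt (fun x' : ℝ => (h ⟨x', y⟩).im) (deriv h ⟨x, y⟩).im x := by
  have := Complex.imCLM.hasFDerivAt.comp_hasDerivAt x (hasDerivAt_compX hd)
  simpa [Function.comp_def] using this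

private lemma hasDerivAt_re_compY {h : ℂ → ℂ} {x y : ℝ} (hd : DifferentiableAt ℂ h ⟨x, y⟩) :
    HasDerivAt (fun y' : ℝ => (h ⟨x, y'⟩).re) (-(deriv h ⟨x, y⟩).im) y := by
  have := Complex.reCLM.hasFDerivAt.comp_hasDerivAt y (hasDerivAt_compY hd)
  simpa [Function.comp_def] using this

private lemma hasDerivAt_im_compY {h : ℂ → ℂ} {x y : ℝ} (hd : DifferentiableAt ℂ h ⟨x, y⟩) :
    HasDerivAt (fun y' : ℝ => (h ⟨x, y'⟩).im) ((deriv h ⟨x, y⟩).re) y := by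
  have := Complex.imCLM.hasFDerivAt.comp_hasDerivAt y (hasDerivAt_compY hd)
  simpa [Function.comp_def] using this

private lemma eventually_analyticAt {f : ℂ → ℂ} {z : ℂ}
    (h : ∀ᶠ w in nhds z, DifferentiableAt ℂ f w) :
    ∀ᶠ w in nhds z, AnalyticAt ℂ f w := by
  filter_upwards [h.eventually_nhds] with w hw
  exact analyticAt_iff_eventually_differentiableAt.mpr hw

private lemma analyticAt_deriv' {f : ℂ → ℂ} {z : ℂ} (h : AnalyticAt ℂ f z) :
    AnalyticAt ℂ (deriv f) z := by
  have h1 : AnalyticAt ℂ (fun w => fderiv ℂ f w 1) z :=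
    ((ContinuousLinearMap.apply ℂ ℂ (1 : ℂ)).analyticAt _).comp h.fderiv
  have e : deriv f = fun w => fderiv ℂ f w 1 := funext fun w => (fderiv_apply_one_eq_deriv).symm
  rw [e]; exact h1

private lemma continuous_mkX (y : ℝ) : Continuous (fun x' : ℝ => (⟨x', y⟩ : ℂ)) := by
  have e : (fun x' : ℝ => (⟨x', y⟩ : ℂ)) = fun x' : ℝ => (x' : ℂ) + ⟨0, y⟩ := by
    funext x'; apply Complex.ext <;> simp
  rw [e]; exact Complex.continuous_ofReal.add continuous_const

private lemma continuous_mkY (x : ℝ) : Continuous (fun y' : ℝ => (⟨x, y'⟩ : ℂ)) := by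
  have e : (fun y' : ℝ => (⟨x, y'⟩ : ℂ)) = fun y' : ℝ => (y' : ℂ) * Complex.I + ⟨x, 0⟩ := by
    funext y'; apply Complex.ext <;> simp
  rw [e]; exact (Complex.continuous_ofReal.mul continuous_const).add continuous_const

private lemma prod_smul_expand (p q : ℝ) :
    ((p, q) : ℝ × ℝ) = p • ((1, 0) : ℝ × ℝ) + q • ((0, 1) : ℝ × ℝ) := by
  simp [Prod.ext_iff]

private lemma bilinear_rot (H : ℝ × ℝ →L[ℝ] (ℝ × ℝ →L[ℝ] ℝ)) (p q : ℝ) :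
    H (p, q) (p, q) + H (-q, p) (-q, p)
      = (p ^ 2 + q ^ 2) * (H (1, 0) (1, 0) + H (0, 1) (0, 1)) := by
  rw [prod_smul_expand p q, prod_smul_expand (-q) p]
  simp only [map_add, map_smul, ContinuousLinearMap.add_apply, ContinuousLinearMap.smul_apply,
    smul_eq_mul]
  ring

private lemma second_deriv_re_x {h : ℂ → ℂ} {x y : ℝ}
    (ha : ∀ᶠ w in nhds (⟨x, y⟩ : ℂ), AnalyticAt ℂ h w) :
    deriv (deriv (fun x' : ℝ => (h ⟨x', y⟩).re)) x = (deriv (deriv h) ⟨x, y⟩).re := by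
  have tX : Filter.Tendsto (fun x' : ℝ => (⟨x', y⟩ : ℂ)) (nhds x) (nhds ⟨x, y⟩) :=
    (continuous_mkX y).tendsto x
  have hev : ∀ᶠ x' in nhds x, AnalyticAt ℂ h (⟨x', y⟩ : ℂ) := tX.eventually ha
  have h1 : deriv (fun x' : ℝ => (h ⟨x', y⟩).re) =ᶠ[nhds x]
      fun x' => (deriv h ⟨x', y⟩).re := by
    filter_upwards [hev] with x' hx'
    exact (hasDerivAt_re_compX hx'.differentiableAt).deriv
  rw [h1.deriv_eq]
  exact (hasDerivAt_re_compX (analyticAt_deriv' ha.self_of_nhds).differentiableAt).deriv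

private lemma second_deriv_re_y {h : ℂ → ℂ} {x y : ℝ}
    (ha : ∀ᶠ w in nhds (⟨x, y⟩ : ℂ), AnalyticAt ℂ h w) :
    deriv (deriv (fun y' : ℝ => (h ⟨x, y'⟩).re)) y = -(deriv (deriv h) ⟨x, y⟩).re := by
  have tY : Filter.Tendsto (fun y' : ℝ => (⟨x, y'⟩ : ℂ)) (nhds y) (nhds ⟨x, y⟩) :=
    (continuous_mkY x).tendsto y
  have hev : ∀ᶠ y' in nhds y, AnalyticAt ℂ h (⟨x, y'⟩ : ℂ) := tY.eventually ha
  have h1 : deriv (fun y' : ℝ => (h ⟨x, y'⟩).re) =ᶠ[nhds y]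
      fun y' => -(deriv h ⟨x, y'⟩).im := by
    filter_upwards [hev] with y' hy'
    exact (hasDerivAt_re_compY hy'.differentiableAt).deriv
  rw [h1.deriv_eq]
  have h2 : HasDerivAt (fun y' : ℝ => (deriv h ⟨x, y'⟩).im) ((deriv (deriv h) ⟨x, y⟩).re) y :=
    hasDerivAt_im_compY (analyticAt_deriv' ha.self_of_nhds).differentiableAt
  simpa using h2.neg.deriv

private lemma comp_second_deriv (G : ℝ × ℝ → ℝ) (hG : ContDiff ℝ 2 G)
    (γ : ℝ → ℝ × ℝ) (w : ℝ → ℝ × ℝ) {s₀ : ℝ} {w' : ℝ × ℝ}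
    (hγ : ∀ᶠ s in nhds s₀, HasDerivAt γ (w s) s)
    (hw : HasDerivAt w w' s₀) :
    deriv (deriv (fun s => G (γ s))) s₀ =
      fderiv ℝ (fderiv ℝ G) (γ s₀) (w s₀) (w s₀) + fderiv ℝ G (γ s₀) w' := by
  have hGd : ∀ p, DifferentiableAt ℝ G p := fun p =>
    (hG.differentiable (by norm_num)).differentiableAt
  have h1 : deriv (fun s => G (γ s)) =ᶠ[nhds s₀] fun s => fderiv ℝ G (γ s) (w s) := by
    filter_upwards [hγ] with s hs
    exact ((hGd (γ s)).hasFDerivAt.comp_hasDerivAt s hs).deriv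
  rw [h1.deriv_eq]
  have hG' : DifferentiableAt ℝ (fderiv ℝ G) (γ s₀) :=
    ((hG.fderiv_right (m := 1) (by norm_num)).differentiable one_ne_zero).differentiableAt
  have hΦ : HasDerivAt (fun s => fderiv ℝ G (γ s)) (fderiv ℝ (fderiv ℝ G) (γ s₀) (w s₀)) s₀ :=
    hG'.hasFDerivAt.comp_hasDerivAt s₀ hγ.self_of_nhds
  exact (hΦ.clm_apply hw).deriv

/-- Conformal-change symmetry of the surface hyperbolic geometric flow equation
`u_tt = (ln u)_xx + (ln u)_yy`: if `φ` is holomorphic on an open `U ⊆ ℂ` with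
nonvanishing derivative and `u` is a positive solution, then
`ũ(z,t) = u(Re φ(z), Im φ(z), t) · |φ'(z)|²` is a positive solution on `U × ℝ`. -/
theorem hyperbolic_flow_conformal_symmetry
    (U : Set ℂ) (hU : IsOpen U) (φ : ℂ → ℂ)
    (hφ : DifferentiableOn ℂ φ U)
    (hφ' : ∀ z ∈ U, deriv φ z ≠ 0)
    (u : ℝ → ℝ → ℝ → ℝ)
    (hu_pos : ∀ x y t : ℝ, 0 < u x y t)
    (hu_smooth : ContDiff ℝ 2 (fun p : ℝ × ℝ × ℝ => u p.1 p.2.1 p.2.2))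
    (hu_pde : ∀ x y t : ℝ,
      deriv (deriv (fun t' => u x y t')) t =
        deriv (deriv (fun x' => Real.log (u x' y t))) x +
        deriv (deriv (fun y' => Real.log (u x y' t))) y)
    (v : ℝ → ℝ → ℝ → ℝ)
    (hv : v = fun x y t =>
      u (φ ⟨x, y⟩).re (φ ⟨x, y⟩).im t * ‖deriv φ ⟨x, y⟩‖ ^ 2) :
    ∀ x y t : ℝ, (⟨x, y⟩ : ℂ) ∈ U →
      0 < v x y t ∧
      deriv (deriv (fun t' => v x y t')) t =
        deriv (deriv (fun x' => Real.log (v x' y t))) x +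
        deriv (deriv (fun y' => Real.log (v x y' t))) y := by
  subst hv
  intro x y t hz
  have hd0 : deriv φ ⟨x, y⟩ ≠ 0 := hφ' _ hz
  have habs0 : (0:ℝ) < ‖deriv φ ⟨x, y⟩‖ := norm_pos_iff.mpr hd0
  have hc : (0:ℝ) < ‖deriv φ ⟨x, y⟩‖ ^ 2 := by positivity
  refine ⟨mul_pos (hu_pos _ _ _) hc, ?_⟩
  -- the spatial function G(p) = log u(p, t)
  set G : ℝ × ℝ → ℝ := fun p => Real.log (u p.1 p.2 t) with hGdef
  have hG : ContDiff ℝ 2 G := by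
    rw [hGdef]
    have h1 : ContDiff ℝ 2 (fun p : ℝ × ℝ => u p.1 p.2 t) :=
      hu_smooth.comp (contDiff_fst.prodMk (contDiff_snd.prodMk contDiff_const))
    rw [contDiff_iff_contDiffAt]
    intro p
    exact (Real.contDiffAt_log.mpr (hu_pos p.1 p.2 t).ne').comp p h1.contDiffAt
  have hGd : ∀ p, DifferentiableAt ℝ G p := fun p =>
    (hG.differentiable (by norm_num)).differentiableAt
  have hG' : Differentiable ℝ (fderiv ℝ G) :=
    (hG.fderiv_right (m := 1) (by norm_num)).differentiable one_ne_zero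
  -- slices of the PDE right-hand side in terms of second fderiv of G
  have sliceX : ∀ p q : ℝ, deriv (deriv (fun x' => Real.log (u x' q t))) p
      = fderiv ℝ (fderiv ℝ G) (p, q) (1, 0) (1, 0) := by
    intro p q
    have he : (fun x' : ℝ => Real.log (u x' q t)) = fun x' : ℝ => G (x', q) := by
      rw [hGdef]
    rw [he]
    have := comp_second_deriv G hG (fun s => (s, q)) (fun _ => ((1 : ℝ), (0 : ℝ)))
      (Filter.Eventually.of_forall fun s => (HasDerivAt.prodMk (hasDerivAt_id s) (hasDerivAt_const s q)))
      (hasDerivAt_const p ((1 : ℝ), (0 : ℝ)))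
    simpa using this
  have sliceY : ∀ p q : ℝ, deriv (deriv (fun y' => Real.log (u p y' t))) q
      = fderiv ℝ (fderiv ℝ G) (p, q) (0, 1) (0, 1) := by
    intro p q
    have he : (fun y' : ℝ => Real.log (u p y' t)) = fun y' : ℝ => G (p, y') := by
      rw [hGdef]
    rw [he]
    have := comp_second_deriv G hG (fun s => (p, s)) (fun _ => ((0 : ℝ), (1 : ℝ)))
      (Filter.Eventually.of_forall fun s => (HasDerivAt.prodMk (hasDerivAt_const s p) (hasDerivAt_id s)))
      (hasDerivAt_const q ((0 : ℝ), (1 : ℝ)))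
    simpa using this
  -- left-hand side: the conformal factor is constant in t
  have hψ : ContDiff ℝ 2 (fun t' => u (φ ⟨x, y⟩).re (φ ⟨x, y⟩).im t') :=
    hu_smooth.comp (contDiff_const.prodMk (contDiff_const.prodMk contDiff_id))
  have hLHS : deriv (deriv (fun t' =>
        u (φ ⟨x, y⟩).re (φ ⟨x, y⟩).im t' * ‖deriv φ ⟨x, y⟩‖ ^ 2)) t
      = deriv (deriv (fun t' => u (φ ⟨x, y⟩).re (φ ⟨x, y⟩).im t')) t
          * ‖deriv φ ⟨x, y⟩‖ ^ 2 := by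
    have h1 : deriv (fun t' =>
          u (φ ⟨x, y⟩).re (φ ⟨x, y⟩).im t' * ‖deriv φ ⟨x, y⟩‖ ^ 2)
        = fun t' => deriv (fun s => u (φ ⟨x, y⟩).re (φ ⟨x, y⟩).im s) t'
            * ‖deriv φ ⟨x, y⟩‖ ^ 2 := by
      funext s
      exact (((hψ.differentiable (by norm_num)) s).hasDerivAt.mul_const _).deriv
    rw [h1]
    have h2 : ContDiff ℝ (1 + 1) (fun t' => u (φ ⟨x, y⟩).re (φ ⟨x, y⟩).im t') := by
      rw [(by norm_num : (1 + 1 : WithTop ℕ∞) = 2)]; exact hψ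
    have hdψ := (contDiff_succ_iff_deriv.mp h2).2.2.differentiable one_ne_zero
    exact ((hdψ t).hasDerivAt.mul_const _).deriv
  -- analytic facts near z₀ = ⟨x, y⟩
  have hφa : ∀ᶠ w in nhds (⟨x, y⟩ : ℂ), AnalyticAt ℂ φ w := by
    filter_upwards [hU.eventually_mem hz] with w hw
    exact hφ.analyticAt (hU.mem_nhds hw)
  have hφ'a : ∀ᶠ w in nhds (⟨x, y⟩ : ℂ), AnalyticAt ℂ (deriv φ) w :=
    hφa.mono fun w hw => analyticAt_deriv' hw
  have hdcont : ContinuousAt (deriv φ) ⟨x, y⟩ := (hφ'a.self_of_nhds).continuousAt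
  have hdne : ∀ᶠ w in nhds (⟨x, y⟩ : ℂ), deriv φ w ≠ 0 := hdcont.eventually_ne hd0
  set L : ℂ → ℂ := fun w => Complex.log (deriv φ w / deriv φ ⟨x, y⟩) with hLdef
  have hslit : ∀ᶠ w in nhds (⟨x, y⟩ : ℂ),
      deriv φ w / deriv φ ⟨x, y⟩ ∈ Complex.slitPlane := by
    have hcont : ContinuousAt (fun w => deriv φ w / deriv φ ⟨x, y⟩) ⟨x, y⟩ :=
      hdcont.div_const _
    have h1 : (deriv φ ⟨x, y⟩ / deriv φ ⟨x, y⟩) ∈ Complex.slitPlane := by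
      rw [div_self hd0]; exact Complex.one_mem_slitPlane
    exact hcont.eventually_mem (Complex.isOpen_slitPlane.mem_nhds h1)
  have hLdiff : ∀ᶠ w in nhds (⟨x, y⟩ : ℂ), DifferentiableAt ℂ L w := by
    rw [hLdef]
    filter_upwards [hφ'a, hslit] with w h1 h2
    exact (h1.differentiableAt.div_const _).clog h2
  have hLa : ∀ᶠ w in nhds (⟨x, y⟩ : ℂ), AnalyticAt ℂ L w := eventually_analyticAt hLdiff
  -- the key local logarithmic identity
  have hlog : ∀ᶠ w in nhds (⟨x, y⟩ : ℂ),
      Real.log (u (φ w).re (φ w).im t * ‖deriv φ w‖ ^ 2)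
        = G ((φ w).re, (φ w).im)
          + (2 * (L w).re + 2 * Real.log (‖deriv φ ⟨x, y⟩‖)) := by
    filter_upwards [hdne] with w hw
    have h1 : (0:ℝ) < ‖deriv φ w‖ := norm_pos_iff.mpr hw
    have h2 : (L w).re
        = Real.log (‖deriv φ w‖) - Real.log (‖deriv φ ⟨x, y⟩‖) := by
      rw [hLdef]
      rw [Complex.log_re, norm_div, Real.log_div h1.ne' habs0.ne']
    rw [hGdef]
    rw [Real.log_mul (hu_pos _ _ _).ne' (by positivity), Real.log_pow, h2]
    push_cast
    ring

  -- the x-slice second derivative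
  have tX : Filter.Tendsto (fun x' : ℝ => (⟨x', y⟩ : ℂ)) (nhds x) (nhds ⟨x, y⟩) :=
    (continuous_mkX y).tendsto x
  have hfirstX : deriv (fun x' => Real.log
        (u (φ ⟨x', y⟩).re (φ ⟨x', y⟩).im t * ‖deriv φ ⟨x', y⟩‖ ^ 2))
      =ᶠ[nhds x] fun x' =>
        fderiv ℝ G ((φ ⟨x', y⟩).re, (φ ⟨x', y⟩).im)
            ((deriv φ ⟨x', y⟩).re, (deriv φ ⟨x', y⟩).im)
          + 2 * (deriv L ⟨x', y⟩).re := by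
    filter_upwards [tX.eventually hφa, tX.eventually hLdiff, tX.eventually hlog.eventually_nhds]
      with x' h1 h2 h3
    have tX' : Filter.Tendsto (fun s : ℝ => (⟨s, y⟩ : ℂ)) (nhds x') (nhds ⟨x', y⟩) :=
      (continuous_mkX y).tendsto x'
    have heq : (fun s : ℝ => Real.log (u (φ ⟨s, y⟩).re (φ ⟨s, y⟩).im t
          * ‖deriv φ ⟨s, y⟩‖ ^ 2))
        =ᶠ[nhds x'] fun s => G ((φ ⟨s, y⟩).re, (φ ⟨s, y⟩).im)
          + (2 * (L ⟨s, y⟩).re + 2 * Real.log (‖deriv φ ⟨x, y⟩‖)) :=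
      tX'.eventually h3
    have hγ : HasDerivAt (fun s : ℝ => ((φ ⟨s, y⟩).re, (φ ⟨s, y⟩).im))
        ((deriv φ ⟨x', y⟩).re, (deriv φ ⟨x', y⟩).im) x' :=
      HasDerivAt.prodMk (hasDerivAt_re_compX h1.differentiableAt) (hasDerivAt_im_compX h1.differentiableAt)
    have hA : HasDerivAt (fun s : ℝ => G ((φ ⟨s, y⟩).re, (φ ⟨s, y⟩).im))
        (fderiv ℝ G ((φ ⟨x', y⟩).re, (φ ⟨x', y⟩).im)
          ((deriv φ ⟨x', y⟩).re, (deriv φ ⟨x', y⟩).im)) x' :=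
      (hGd _).hasFDerivAt.comp_hasDerivAt x' hγ
    have hB : HasDerivAt (fun s : ℝ => 2 * (L ⟨s, y⟩).re
          + 2 * Real.log (‖deriv φ ⟨x, y⟩‖))
        (2 * (deriv L ⟨x', y⟩).re) x' := by
      simpa using ((hasDerivAt_re_compX h2).const_mul 2).add_const
        (2 * Real.log (‖deriv φ ⟨x, y⟩‖))
    exact (((hA.add hB).congr_of_eventuallyEq heq).deriv)
  have hX2 : deriv (deriv (fun x' => Real.log
        (u (φ ⟨x', y⟩).re (φ ⟨x', y⟩).im t * ‖deriv φ ⟨x', y⟩‖ ^ 2))) x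
      = fderiv ℝ (fderiv ℝ G) ((φ ⟨x, y⟩).re, (φ ⟨x, y⟩).im)
            ((deriv φ ⟨x, y⟩).re, (deriv φ ⟨x, y⟩).im)
            ((deriv φ ⟨x, y⟩).re, (deriv φ ⟨x, y⟩).im)
        + fderiv ℝ G ((φ ⟨x, y⟩).re, (φ ⟨x, y⟩).im)
            ((deriv (deriv φ) ⟨x, y⟩).re, (deriv (deriv φ) ⟨x, y⟩).im)
        + 2 * (deriv (deriv L) ⟨x, y⟩).re := by
    rw [hfirstX.deriv_eq]
    have hφd : DifferentiableAt ℂ φ ⟨x, y⟩ := (hφa.self_of_nhds).differentiableAt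
    have hγx : HasDerivAt (fun s : ℝ => ((φ ⟨s, y⟩).re, (φ ⟨s, y⟩).im))
        ((deriv φ ⟨x, y⟩).re, (deriv φ ⟨x, y⟩).im) x :=
      HasDerivAt.prodMk (hasDerivAt_re_compX hφd) (hasDerivAt_im_compX hφd)
    have hΦ : HasDerivAt (fun s : ℝ => fderiv ℝ G ((φ ⟨s, y⟩).re, (φ ⟨s, y⟩).im))
        (fderiv ℝ (fderiv ℝ G) ((φ ⟨x, y⟩).re, (φ ⟨x, y⟩).im)
          ((deriv φ ⟨x, y⟩).re, (deriv φ ⟨x, y⟩).im)) x :=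
      (hG' _).hasFDerivAt.comp_hasDerivAt x hγx
    have hwd : DifferentiableAt ℂ (deriv φ) ⟨x, y⟩ := (hφ'a.self_of_nhds).differentiableAt
    have hw : HasDerivAt (fun s : ℝ => ((deriv φ ⟨s, y⟩).re, (deriv φ ⟨s, y⟩).im))
        ((deriv (deriv φ) ⟨x, y⟩).re, (deriv (deriv φ) ⟨x, y⟩).im) x :=
      HasDerivAt.prodMk (hasDerivAt_re_compX hwd) (hasDerivAt_im_compX hwd)
    have hB : HasDerivAt (fun s : ℝ => 2 * (deriv L ⟨s, y⟩).re)
        (2 * (deriv (deriv L) ⟨x, y⟩).re) x :=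
      (hasDerivAt_re_compX (analyticAt_deriv' hLa.self_of_nhds).differentiableAt).const_mul 2
    exact ((hΦ.clm_apply hw).add hB).deriv
  -- the y-slice second derivative
  have tY : Filter.Tendsto (fun y' : ℝ => (⟨x, y'⟩ : ℂ)) (nhds y) (nhds ⟨x, y⟩) :=
    (continuous_mkY x).tendsto y
  have hfirstY : deriv (fun y' => Real.log
        (u (φ ⟨x, y'⟩).re (φ ⟨x, y'⟩).im t * ‖deriv φ ⟨x, y'⟩‖ ^ 2))
      =ᶠ[nhds y] fun y' =>
        fderiv ℝ G ((φ ⟨x, y'⟩).re, (φ ⟨x, y'⟩).im)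
            (-(deriv φ ⟨x, y'⟩).im, (deriv φ ⟨x, y'⟩).re)
          + 2 * -(deriv L ⟨x, y'⟩).im := by
    filter_upwards [tY.eventually hφa, tY.eventually hLdiff, tY.eventually hlog.eventually_nhds]
      with y' h1 h2 h3
    have tY' : Filter.Tendsto (fun s : ℝ => (⟨x, s⟩ : ℂ)) (nhds y') (nhds ⟨x, y'⟩) :=
      (continuous_mkY x).tendsto y'
    have heq : (fun s : ℝ => Real.log (u (φ ⟨x, s⟩).re (φ ⟨x, s⟩).im t
          * ‖deriv φ ⟨x, s⟩‖ ^ 2))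
        =ᶠ[nhds y'] fun s => G ((φ ⟨x, s⟩).re, (φ ⟨x, s⟩).im)
          + (2 * (L ⟨x, s⟩).re + 2 * Real.log (‖deriv φ ⟨x, y⟩‖)) :=
      tY'.eventually h3
    have hγ : HasDerivAt (fun s : ℝ => ((φ ⟨x, s⟩).re, (φ ⟨x, s⟩).im))
        (-(deriv φ ⟨x, y'⟩).im, (deriv φ ⟨x, y'⟩).re) y' :=
      HasDerivAt.prodMk (hasDerivAt_re_compY h1.differentiableAt) (hasDerivAt_im_compY h1.differentiableAt)
    have hA : HasDerivAt (fun s : ℝ => G ((φ ⟨x, s⟩).re, (φ ⟨x, s⟩).im))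
        (fderiv ℝ G ((φ ⟨x, y'⟩).re, (φ ⟨x, y'⟩).im)
          (-(deriv φ ⟨x, y'⟩).im, (deriv φ ⟨x, y'⟩).re)) y' :=
      (hGd _).hasFDerivAt.comp_hasDerivAt y' hγ
    have hB : HasDerivAt (fun s : ℝ => 2 * (L ⟨x, s⟩).re
          + 2 * Real.log (‖deriv φ ⟨x, y⟩‖))
        (2 * -(deriv L ⟨x, y'⟩).im) y' := by
      simpa using ((hasDerivAt_re_compY h2).const_mul 2).add_const
        (2 * Real.log (‖deriv φ ⟨x, y⟩‖))
    exact (((hA.add hB).congr_of_eventuallyEq heq).deriv)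
  have hY2 : deriv (deriv (fun y' => Real.log
        (u (φ ⟨x, y'⟩).re (φ ⟨x, y'⟩).im t * ‖deriv φ ⟨x, y'⟩‖ ^ 2))) y
      = fderiv ℝ (fderiv ℝ G) ((φ ⟨x, y⟩).re, (φ ⟨x, y⟩).im)
            (-(deriv φ ⟨x, y⟩).im, (deriv φ ⟨x, y⟩).re)
            (-(deriv φ ⟨x, y⟩).im, (deriv φ ⟨x, y⟩).re)
        + fderiv ℝ G ((φ ⟨x, y⟩).re, (φ ⟨x, y⟩).im)
            (-(deriv (deriv φ) ⟨x, y⟩).re, -(deriv (deriv φ) ⟨x, y⟩).im)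
        + 2 * -(deriv (deriv L) ⟨x, y⟩).re := by
    rw [hfirstY.deriv_eq]
    have hφd : DifferentiableAt ℂ φ ⟨x, y⟩ := (hφa.self_of_nhds).differentiableAt
    have hγy : HasDerivAt (fun s : ℝ => ((φ ⟨x, s⟩).re, (φ ⟨x, s⟩).im))
        (-(deriv φ ⟨x, y⟩).im, (deriv φ ⟨x, y⟩).re) y :=
      HasDerivAt.prodMk (hasDerivAt_re_compY hφd) (hasDerivAt_im_compY hφd)
    have hΦ : HasDerivAt (fun s : ℝ => fderiv ℝ G ((φ ⟨x, s⟩).re, (φ ⟨x, s⟩).im))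
        (fderiv ℝ (fderiv ℝ G) ((φ ⟨x, y⟩).re, (φ ⟨x, y⟩).im)
          (-(deriv φ ⟨x, y⟩).im, (deriv φ ⟨x, y⟩).re)) y :=
      (hG' _).hasFDerivAt.comp_hasDerivAt y hγy
    have hwd : DifferentiableAt ℂ (deriv φ) ⟨x, y⟩ := (hφ'a.self_of_nhds).differentiableAt
    have hw : HasDerivAt (fun s : ℝ => (-(deriv φ ⟨x, s⟩).im, (deriv φ ⟨x, s⟩).re))
        (-(deriv (deriv φ) ⟨x, y⟩).re, -(deriv (deriv φ) ⟨x, y⟩).im) y :=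
      HasDerivAt.prodMk ((hasDerivAt_im_compY hwd).neg) (hasDerivAt_re_compY hwd)
    have hB : HasDerivAt (fun s : ℝ => 2 * -(deriv L ⟨x, s⟩).im)
        (2 * -(deriv (deriv L) ⟨x, y⟩).re) y :=
      ((hasDerivAt_im_compY
        (analyticAt_deriv' hLa.self_of_nhds).differentiableAt).neg).const_mul 2
    exact ((hΦ.clm_apply hw).add hB).deriv
  -- assembling everything
  rw [hLHS, hX2, hY2, hu_pde (φ ⟨x, y⟩).re (φ ⟨x, y⟩).im t,
    sliceX (φ ⟨x, y⟩).re (φ ⟨x, y⟩).im, sliceY (φ ⟨x, y⟩).re (φ ⟨x, y⟩).im]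
  have hsum0 : fderiv ℝ G ((φ ⟨x, y⟩).re, (φ ⟨x, y⟩).im)
        ((deriv (deriv φ) ⟨x, y⟩).re, (deriv (deriv φ) ⟨x, y⟩).im)
      + fderiv ℝ G ((φ ⟨x, y⟩).re, (φ ⟨x, y⟩).im)
        (-(deriv (deriv φ) ⟨x, y⟩).re, -(deriv (deriv φ) ⟨x, y⟩).im) = 0 := by
    rw [← map_add]
    have h0 : ((deriv (deriv φ) ⟨x, y⟩).re, (deriv (deriv φ) ⟨x, y⟩).im)
        + (-(deriv (deriv φ) ⟨x, y⟩).re, -(deriv (deriv φ) ⟨x, y⟩).im) = ((0 : ℝ), (0 : ℝ)) := by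
      simp [Prod.ext_iff]
    rw [h0]
    exact map_zero _
  have hrot := bilinear_rot
    (fderiv ℝ (fderiv ℝ G) ((φ ⟨x, y⟩).re, (φ ⟨x, y⟩).im))
    (deriv φ ⟨x, y⟩).re (deriv φ ⟨x, y⟩).im
  have habs2 : ‖deriv φ ⟨x, y⟩‖ ^ 2
      = (deriv φ ⟨x, y⟩).re ^ 2 + (deriv φ ⟨x, y⟩).im ^ 2 := by
    rw [Complex.sq_norm, Complex.normSq_apply]; ring
  rw [habs2]
  linarith [hrot, hsum0]
end

section
/- Let ω : (0,∞) → ℝ be a positive twice continuously differentiable function and define u : ℝ × (0,∞) → ℝ by u(y, t) := t² ω(e^{y}/t). Then u satisfies u_{tt} = (ln u)_{yy} at every point of ℝ × (0,∞) if and only if ω satisfies, at every z > 0, the reduced ordinary differential equation z²(ω² − ω) ω″ − z(2ω² + ω) ω′ + z² (ω′)² + 2 ω³ = 0. In particular, for such ω the x-independent function u(x, y, t) = t² ω(e^{y}/t) solves the surface hyperbolic geometric flow equation u_{tt} = (ln u)_{xx} + (ln u)_{yy} on ℝ² × (0,∞). -/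
open Real

/-- The second time-derivative of `t ↦ t² ω(c/t)` at `t > 0`. -/
private lemma hgf_lhs (ω : ℝ → ℝ)
    (h1 : ∀ z : ℝ, 0 < z → HasDerivAt ω (deriv ω z) z)
    (h2 : ∀ z : ℝ, 0 < z → HasDerivAt (deriv ω) (deriv (deriv ω) z) z)
    (y t : ℝ) (ht : 0 < t) :
    deriv (deriv (fun t' => t' ^ 2 * ω (Real.exp y / t'))) t =
      2 * ω (Real.exp y / t) - 2 * (Real.exp y / t) * deriv ω (Real.exp y / t)
        + (Real.exp y / t) ^ 2 * deriv (deriv ω) (Real.exp y / t) := by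
  set c := Real.exp y with hc
  have hcpos : 0 < c := Real.exp_pos y
  have hF : ∀ s : ℝ, 0 < s → HasDerivAt (fun t' => t' ^ 2 * ω (c / t'))
      (2 * s * ω (c / s) - c * deriv ω (c / s)) s := by
    intro s hs
    have hz : 0 < c / s := div_pos hcpos hs
    have hinner : HasDerivAt (fun t' : ℝ => c / t') ((0 * s - c * 1) / s ^ 2) s :=
      (hasDerivAt_const s c).div (hasDerivAt_id s) hs.ne'
    have hcomp := (h1 _ hz).comp s hinner
    have hmul := (hasDerivAt_pow 2 s).mul hcomp
    refine hmul.congr_deriv ?_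
    rw [Function.comp_apply]
    field_simp [hs.ne']
    ring
  have hev : deriv (fun t' => t' ^ 2 * ω (c / t')) =ᶠ[nhds t]
      (fun s => 2 * s * ω (c / s) - c * deriv ω (c / s)) := by
    filter_upwards [isOpen_Ioi.mem_nhds ht] with s hs
    exact (hF s hs).deriv
  rw [hev.deriv_eq]
  have hz : 0 < c / t := div_pos hcpos ht
  have hinner : HasDerivAt (fun t' : ℝ => c / t') ((0 * t - c * 1) / t ^ 2) t :=
    (hasDerivAt_const t c).div (hasDerivAt_id t) ht.ne'
  have hA := ((hasDerivAt_id t).const_mul 2).mul ((h1 _ hz).comp t hinner)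
  have hB := ((h2 _ hz).comp t hinner).const_mul c
  have hG : HasDerivAt (fun s => 2 * s * ω (c / s) - c * deriv ω (c / s))
      (2 * 1 * ω (c / t) + 2 * t * (deriv ω (c / t) * ((0 * t - c * 1) / t ^ 2)) -
        c * (deriv (deriv ω) (c / t) * ((0 * t - c * 1) / t ^ 2))) t := hA.sub hB
  rw [hG.deriv]
  field_simp [ht.ne']
  ring

/-- The second y-derivative of `y ↦ log (t² ω(e^y/t))` for `t > 0`. -/
private lemma hgf_rhs (ω : ℝ → ℝ)
    (hω_pos : ∀ z : ℝ, 0 < z → 0 < ω z)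
    (h1 : ∀ z : ℝ, 0 < z → HasDerivAt ω (deriv ω z) z)
    (h2 : ∀ z : ℝ, 0 < z → HasDerivAt (deriv ω) (deriv (deriv ω) z) z)
    (y t : ℝ) (ht : 0 < t) :
    deriv (deriv (fun y' => Real.log (t ^ 2 * ω (Real.exp y' / t)))) y =
      ((Real.exp y / t) * deriv ω (Real.exp y / t) * ω (Real.exp y / t)
        + (Real.exp y / t) ^ 2 * deriv (deriv ω) (Real.exp y / t) * ω (Real.exp y / t)
        - (Real.exp y / t) ^ 2 * (deriv ω (Real.exp y / t)) ^ 2) / (ω (Real.exp y / t)) ^ 2 := by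
  have hzpos : ∀ s : ℝ, 0 < Real.exp s / t := fun s => div_pos (Real.exp_pos s) ht
  have hwpos : ∀ s : ℝ, 0 < ω (Real.exp s / t) := fun s => hω_pos _ (hzpos s)
  have hinner : ∀ s : ℝ, HasDerivAt (fun y' : ℝ => Real.exp y' / t) (Real.exp s / t) s :=
    fun s => (Real.hasDerivAt_exp s).div_const t
  have hfun : deriv (fun y' => Real.log (t ^ 2 * ω (Real.exp y' / t))) =
      fun s => (Real.exp s / t) * deriv ω (Real.exp s / t) / ω (Real.exp s / t) := by
    funext s
    have hcomp := (h1 _ (hzpos s)).comp s (hinner s)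
    have hmul := hcomp.const_mul (t ^ 2)
    have hlog : HasDerivAt (fun y' => Real.log (t ^ 2 * ω (Real.exp y' / t)))
        (t ^ 2 * (deriv ω (Real.exp s / t) * (Real.exp s / t)) / (t ^ 2 * ω (Real.exp s / t))) s :=
      hmul.log (ne_of_gt (mul_pos (pow_pos ht 2) (hwpos s)))
    rw [hlog.deriv]
    field_simp [ht.ne', (hwpos s).ne']
  rw [hfun]
  have hA := ((hinner y).mul ((h2 _ (hzpos y)).comp y (hinner y)))
  have hB := (h1 _ (hzpos y)).comp y (hinner y)
  have hK : HasDerivAt (fun s => Real.exp s / t * deriv ω (Real.exp s / t) / ω (Real.exp s / t))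
      (((Real.exp y / t * deriv ω (Real.exp y / t) +
          Real.exp y / t * (deriv (deriv ω) (Real.exp y / t) * (Real.exp y / t))) *
            ω (Real.exp y / t) -
        Real.exp y / t * deriv ω (Real.exp y / t) * (deriv ω (Real.exp y / t) * (Real.exp y / t))) /
        ω (Real.exp y / t) ^ 2) y := hA.div hB (hwpos y).ne'
  rw [hK.deriv]
  field_simp [ht.ne', (hwpos y).ne']

/-- Group-invariant solutions of the surface hyperbolic geometric flow:
`u(y,t) = t² ω(e^y / t)` solves `u_tt = (ln u)_yy` on `ℝ × (0,∞)` iff the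
profile `ω` satisfies the reduced ODE
`z²(ω² − ω)ω″ − z(2ω² + ω)ω′ + z²(ω′)² + 2ω³ = 0` on `(0,∞)`; in particular,
for such `ω` the `x`-independent function `u(x,y,t) = t² ω(e^y / t)` solves the
full equation `u_tt = (ln u)_xx + (ln u)_yy` on `ℝ² × (0,∞)`. -/
theorem hyperbolic_flow_invariant_reduction
    (ω : ℝ → ℝ)
    (hω_pos : ∀ z : ℝ, 0 < z → 0 < ω z)
    (hω_smooth : ContDiffOn ℝ 2 ω (Set.Ioi (0 : ℝ))) :
    ((∀ y t : ℝ, 0 < t →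
      deriv (deriv (fun t' => t' ^ 2 * ω (Real.exp y / t'))) t =
        deriv (deriv (fun y' => Real.log (t ^ 2 * ω (Real.exp y' / t)))) y)
    ↔
    (∀ z : ℝ, 0 < z →
      z ^ 2 * (ω z ^ 2 - ω z) * deriv (deriv ω) z -
        z * (2 * ω z ^ 2 + ω z) * deriv ω z +
        z ^ 2 * (deriv ω z) ^ 2 + 2 * ω z ^ 3 = 0))
    ∧
    ((∀ z : ℝ, 0 < z →
      z ^ 2 * (ω z ^ 2 - ω z) * deriv (deriv ω) z -
        z * (2 * ω z ^ 2 + ω z) * deriv ω z +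
        z ^ 2 * (deriv ω z) ^ 2 + 2 * ω z ^ 3 = 0) →
      ∀ x y t : ℝ, 0 < t →
        deriv (deriv (fun t' => t' ^ 2 * ω (Real.exp y / t'))) t =
          deriv (deriv (fun _x' : ℝ => Real.log (t ^ 2 * ω (Real.exp y / t)))) x +
          deriv (deriv (fun y' => Real.log (t ^ 2 * ω (Real.exp y' / t)))) y) := by
  have h1 : ∀ z : ℝ, 0 < z → HasDerivAt ω (deriv ω z) z := by
    intro z hz
    exact (((hω_smooth.differentiableOn (by norm_num)) z hz).differentiableAt
      (isOpen_Ioi.mem_nhds hz)).hasDerivAt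
  have h2 : ∀ z : ℝ, 0 < z → HasDerivAt (deriv ω) (deriv (deriv ω) z) z := by
    intro z hz
    have hc1 : ContDiffOn ℝ 1 (deriv ω) (Set.Ioi (0:ℝ)) :=
      hω_smooth.deriv_of_isOpen isOpen_Ioi (by norm_num)
    exact (((hc1.differentiableOn (by norm_num)) z hz).differentiableAt
      (isOpen_Ioi.mem_nhds hz)).hasDerivAt
  -- the pointwise equivalence between PDE at (y,t) and ODE at z = e^y/t
  have key : ∀ y t : ℝ, 0 < t →
      ( deriv (deriv (fun t' => t' ^ 2 * ω (Real.exp y / t'))) t =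
        deriv (deriv (fun y' => Real.log (t ^ 2 * ω (Real.exp y' / t)))) y
      ↔
        (Real.exp y / t) ^ 2 * (ω (Real.exp y / t) ^ 2 - ω (Real.exp y / t)) *
            deriv (deriv ω) (Real.exp y / t) -
          (Real.exp y / t) * (2 * ω (Real.exp y / t) ^ 2 + ω (Real.exp y / t)) *
            deriv ω (Real.exp y / t) +
          (Real.exp y / t) ^ 2 * (deriv ω (Real.exp y / t)) ^ 2 +
          2 * ω (Real.exp y / t) ^ 3 = 0 ) := by
    intro y t ht
    rw [hgf_lhs ω h1 h2 y t ht, hgf_rhs ω hω_pos h1 h2 y t ht]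
    have hz : 0 < Real.exp y / t := div_pos (Real.exp_pos y) ht
    have hw : 0 < ω (Real.exp y / t) := hω_pos _ hz
    set z := Real.exp y / t
    set a := ω z
    set b := deriv ω z
    set c2 := deriv (deriv ω) z
    rw [eq_div_iff (pow_pos hw 2).ne']
    constructor
    · intro h; linear_combination h
    · intro h; linear_combination h
  constructor
  · constructor
    · intro hpde z hz
      have := (key (Real.log z) 1 one_pos).mp (hpde (Real.log z) 1 one_pos)
      rwa [Real.exp_log hz, div_one] at this
    · intro hode y t ht
      exact (key y t ht).mpr (hode _ (div_pos (Real.exp_pos y) ht))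
  · intro hode x y t ht
    have hx : deriv (deriv (fun _x' : ℝ => Real.log (t ^ 2 * ω (Real.exp y / t)))) x = 0 := by
      simp
    rw [hx, zero_add]
    exact (key y t ht).mpr (hode _ (div_pos (Real.exp_pos y) ht))
end

section
/- On ℝ⁴ with coordinates (x, y, t, w) and standard basis vectors e_x, e_y, e_t, e_w, define the smooth vector fields (as maps ℝ⁴ → ℝ⁴): v₁(p) = e_t, v₂(p) = e_x, v₃(p) = e_y, v₄(x,y,t,w) = t e_t + e_w, v₅(x,y,t,w) = y e_x − x e_y, v₆(x,y,t,w) = x e_x + y e_y − 2 e_w. Then their Lie brackets [V, W](p) = DW(p)(V(p)) − DV(p)(W(p)) satisfy: [v₁, v₄] = v₁, [v₂, v₅] = −v₃, [v₃, v₅] = v₂, [v₂, v₆] = v₂, [v₃, v₆] = v₃, and all other brackets [v_i, v_j] with 1 ≤ i < j ≤ 6 vanish identically. -/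
/-- The Lie bracket of two `C¹` vector fields on `ℝ⁴`,
`[V, W](p) = DW(p)(V(p)) − DV(p)(W(p))`. -/
noncomputable def lieBracketVF (V W : (Fin 4 → ℝ) → (Fin 4 → ℝ)) : (Fin 4 → ℝ) → (Fin 4 → ℝ) :=
  fun p => fderiv ℝ W p (V p) - fderiv ℝ V p (W p)

/-- Standard basis vector `e_x` on `ℝ⁴` with coordinates `(x, y, t, w)`. -/
def eX : Fin 4 → ℝ := Pi.single 0 1
/-- Standard basis vector `e_y`. -/
def eY : Fin 4 → ℝ := Pi.single 1 1
/-- Standard basis vector `e_t`. -/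
def eT : Fin 4 → ℝ := Pi.single 2 1
/-- Standard basis vector `e_w`. -/
def eW : Fin 4 → ℝ := Pi.single 3 1

/-- `v₁ = ∂_t`. -/
def vf1 : (Fin 4 → ℝ) → (Fin 4 → ℝ) := fun _ => eT
/-- `v₂ = ∂_x`. -/
def vf2 : (Fin 4 → ℝ) → (Fin 4 → ℝ) := fun _ => eX
/-- `v₃ = ∂_y`. -/
def vf3 : (Fin 4 → ℝ) → (Fin 4 → ℝ) := fun _ => eY
/-- `v₄ = t ∂_t + ∂_w`. -/
def vf4 : (Fin 4 → ℝ) → (Fin 4 → ℝ) := fun p => p 2 • eT + eW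
/-- `v₅ = y ∂_x − x ∂_y`. -/
def vf5 : (Fin 4 → ℝ) → (Fin 4 → ℝ) := fun p => p 1 • eX - p 0 • eY
/-- `v₆ = x ∂_x + y ∂_y − 2 ∂_w`. -/
def vf6 : (Fin 4 → ℝ) → (Fin 4 → ℝ) := fun p => p 0 • eX + p 1 • eY - (2 : ℝ) • eW


noncomputable def L4 : (Fin 4 → ℝ) →L[ℝ] (Fin 4 → ℝ) :=
  (ContinuousLinearMap.proj 2).smulRight eT

noncomputable def L5 : (Fin 4 → ℝ) →L[ℝ] (Fin 4 → ℝ) :=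
  (ContinuousLinearMap.proj 1).smulRight eX - (ContinuousLinearMap.proj 0).smulRight eY

noncomputable def L6 : (Fin 4 → ℝ) →L[ℝ] (Fin 4 → ℝ) :=
  (ContinuousLinearMap.proj 0).smulRight eX + (ContinuousLinearMap.proj 1).smulRight eY

lemma fderiv_vf1 (p : Fin 4 → ℝ) : fderiv ℝ vf1 p = 0 := fderiv_const_apply eT
lemma fderiv_vf2 (p : Fin 4 → ℝ) : fderiv ℝ vf2 p = 0 := fderiv_const_apply eX
lemma fderiv_vf3 (p : Fin 4 → ℝ) : fderiv ℝ vf3 p = 0 := fderiv_const_apply eY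

lemma fderiv_vf4 (p : Fin 4 → ℝ) : fderiv ℝ vf4 p = L4 := by
  have h : vf4 = fun q => L4 q + eW := by
    funext q; simp [vf4, L4]
  rw [h]
  exact (L4.hasFDerivAt.add_const eW).fderiv

lemma fderiv_vf5 (p : Fin 4 → ℝ) : fderiv ℝ vf5 p = L5 := by
  have h : vf5 = fun q => L5 q := by
    funext q; simp [vf5, L5]
  rw [h]
  exact L5.hasFDerivAt.fderiv

lemma fderiv_vf6 (p : Fin 4 → ℝ) : fderiv ℝ vf6 p = L6 := by
  have h : vf6 = fun q => L6 q - (2 : ℝ) • eW := by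
    funext q; simp [vf6, L6]
  rw [h]
  exact (L6.hasFDerivAt.sub_const _).fderiv

lemma eX0 : eX 0 = 1 := rfl
lemma eX1 : eX 1 = 0 := rfl
lemma eX2 : eX 2 = 0 := rfl
lemma eY0 : eY 0 = 0 := rfl
lemma eY1 : eY 1 = 1 := rfl
lemma eY2 : eY 2 = 0 := rfl
lemma eT0 : eT 0 = 0 := rfl
lemma eT1 : eT 1 = 0 := rfl
lemma eT2 : eT 2 = 1 := rfl
lemma eW0 : eW 0 = 0 := rfl
lemma eW1 : eW 1 = 0 := rfl
lemma eW2 : eW 2 = 0 := rfl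

/-- Commutator table (3.6) of the symmetry algebra of the surface Ricci flow:
`[v₁,v₄] = v₁`, `[v₂,v₅] = −v₃`, `[v₃,v₅] = v₂`, `[v₂,v₆] = v₂`,
`[v₃,v₆] = v₃`, and all other brackets `[v_i, v_j]` with `i < j` vanish. -/
theorem ricci_flow_symmetry_commutator_table :
    lieBracketVF vf1 vf4 = vf1 ∧
    lieBracketVF vf2 vf5 = -vf3 ∧
    lieBracketVF vf3 vf5 = vf2 ∧
    lieBracketVF vf2 vf6 = vf2 ∧
    lieBracketVF vf3 vf6 = vf3 ∧
    lieBracketVF vf1 vf2 = 0 ∧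
    lieBracketVF vf1 vf3 = 0 ∧
    lieBracketVF vf1 vf5 = 0 ∧
    lieBracketVF vf1 vf6 = 0 ∧
    lieBracketVF vf2 vf3 = 0 ∧
    lieBracketVF vf2 vf4 = 0 ∧
    lieBracketVF vf3 vf4 = 0 ∧
    lieBracketVF vf4 vf5 = 0 ∧
    lieBracketVF vf4 vf6 = 0 ∧
    lieBracketVF vf5 vf6 = 0 := by
  
  refine ⟨?_, ?_, ?_, ?_, ?_, ?_, ?_, ?_, ?_, ?_, ?_, ?_, ?_, ?_, ?_⟩ <;>
  · funext p
    simp [lieBracketVF, fderiv_vf1, fderiv_vf2, fderiv_vf3, fderiv_vf4, fderiv_vf5,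
      fderiv_vf6, L4, L5, L6, vf1, vf2, vf3, vf4, vf5, vf6,
      eX0, eX1, eX2, eY0, eY1, eY2, eT0, eT1, eT2, eW0, eW1, eW2]
end
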